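/- arXiv:2403.14316 — 3 statements merged into one kernel-verified Lean document; each statement's English description precedes it below -/
import Mathlib

section
/- Let n be a positive integer and let F be a finite field with q elements, where q is a power of an odd prime and q ≡ 1 (mod n). Let H = {x ∈ GL₂(F) : det(x) is an n-th power in Fˣ}, the unique index-n normal subgroup of GL₂(F) with abelian quotient. Then gcd(n, (q−1)/n) = 1 if and only if there exists x ∈ GL₂(F) with xⁿ = I such that the map sending i ∈ {0,1,…,n−1} to the coset xⁱH is a bijection onto GL₂(F)/H. -/
private def diagHom2 (F : Type*) [CommRing F] : F →* Matrix (Fin 2) (Fin 2) F where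
  toFun a := Matrix.diagonal ![a, 1]
  map_one' := by
    ext i j
    fin_cases i <;> fin_cases j <;> simp [Matrix.diagonal]
  map_mul' a b := by
    ext i j
    fin_cases i <;> fin_cases j <;> simp [Matrix.diagonal, Matrix.mul_apply,
      Fin.sum_univ_two]

private lemma det_diagHom2 {F : Type*} [CommRing F] (a : F) :
    (diagHom2 F a).det = a := by
  simp [diagHom2, Matrix.det_diagonal, Fin.prod_univ_two]

/-- Let `n` be a positive integer and `F` a finite field with `q` elements, `q` an odd
prime power with `q ≡ 1 (mod n)`.  Let `H = {x ∈ GL₂(F) : det x is an n-th power in Fˣ}`.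
Then `gcd (n, (q-1)/n) = 1` if and only if there exists `x ∈ GL₂(F)` with `x ^ n = 1`
such that `{1, x, …, x^(n-1)}` is a set of representatives for the `H`-cosets. -/
theorem stmt_8 {F : Type*} [Field F] [Fintype F] (q n : ℕ) (hq : Fintype.card F = q)
    (hodd : ∃ p r : ℕ, p.Prime ∧ Odd p ∧ 0 < r ∧ q = p ^ r)
    (hn : 0 < n) (hmod : q ≡ 1 [MOD n])
    (H : Subgroup (GL (Fin 2) F))
    (hH : H = Subgroup.comap (Matrix.GeneralLinearGroup.det : GL (Fin 2) F →* Fˣ)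
      (powMonoidHom n : Fˣ →* Fˣ).range) :
    Nat.gcd n ((q - 1) / n) = 1 ↔
      ∃ x : GL (Fin 2) F, x ^ n = 1 ∧ Function.Bijective
        (fun i : Fin n => (QuotientGroup.mk (x ^ (i : ℕ)) : GL (Fin 2) F ⧸ H)) := by
  classical
  subst hH
  obtain ⟨p, r, hp, hpodd, hr, hqpr⟩ := hodd
  have hq1 : 1 < q := by
    subst hqpr; exact Nat.one_lt_pow hr.ne' hp.one_lt
  have hdvd : n ∣ q - 1 := (Nat.modEq_iff_dvd' (le_of_lt hq1)).mp hmod.symm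
  set m := (q - 1) / n with hm_def
  have hqm : n * m = q - 1 := Nat.mul_div_cancel' hdvd
  have hm0 : 0 < m := Nat.div_pos (Nat.le_of_dvd (by omega) hdvd) hn
  have hmZ : (m : ℤ) ≠ 0 := by exact_mod_cast hm0.ne'
  have hnZ : (n : ℤ) ≠ 0 := by exact_mod_cast hn.ne'
  have hcard : Fintype.card Fˣ = q - 1 := by rw [Fintype.card_units, hq]
  obtain ⟨g, hg⟩ := IsCyclic.exists_generator (α := Fˣ)
  have hog : orderOf g = q - 1 := by
    rw [orderOf_eq_card_of_forall_mem_zpowers hg, Nat.card_eq_fintype_card, hcard]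
  have glem : ∀ z : ℤ, g ^ z = 1 ↔ ((q - 1 : ℕ) : ℤ) ∣ z := fun z => by
    rw [← orderOf_dvd_iff_zpow_eq_one, hog]
  have hcast : ((q - 1 : ℕ) : ℤ) = (n : ℤ) * m := by
    rw [← hqm]; push_cast; ring
  -- membership criterion
  have L1 : ∀ v : Fˣ, v ∈ (powMonoidHom n : Fˣ →* Fˣ).range ↔ v ^ m = 1 := by
    intro v
    constructor
    · rintro ⟨w, rfl⟩
      rw [powMonoidHom_apply, ← pow_mul, hqm, ← hcard, pow_card_eq_one]
    · intro hv
      obtain ⟨k, hk0⟩ := hg v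
      have hk : g ^ k = v := hk0
      have h1 : g ^ (k * m) = 1 := by rw [zpow_mul, zpow_natCast, hk, hv]
      have h2 := (glem _).mp h1
      rw [hcast] at h2
      have h3 : (n : ℤ) ∣ k := by
        rwa [mul_dvd_mul_iff_right hmZ] at h2
      obtain ⟨t, ht⟩ := h3
      refine ⟨g ^ t, ?_⟩
      rw [powMonoidHom_apply, ← zpow_natCast (g ^ t) n, ← zpow_mul, mul_comm, ← ht, hk]
  have key2 : ∀ a b : GL (Fin 2) F,
      (QuotientGroup.mk a : GL (Fin 2) F ⧸ Subgroup.comap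
        (Matrix.GeneralLinearGroup.det : GL (Fin 2) F →* Fˣ)
        (powMonoidHom n : Fˣ →* Fˣ).range) = QuotientGroup.mk b ↔
      ((Matrix.GeneralLinearGroup.det a)⁻¹ * Matrix.GeneralLinearGroup.det b) ^ m = 1 := by
    intro a b
    rw [QuotientGroup.eq, Subgroup.mem_comap, L1, map_mul, map_inv]
  constructor
  · -- gcd = 1 → exists x
    intro hgcd
    have hco : IsCoprime (n : ℤ) (m : ℤ) := by
      rw [Int.isCoprime_iff_gcd_eq_one]
      simpa using hgcd
    set u : Fˣ := g ^ m with hu_def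
    have hu1 : ∀ z : ℤ, u ^ z = 1 ↔ (n : ℤ) ∣ z := by
      intro z
      rw [hu_def, ← zpow_natCast g m, ← zpow_mul, glem, hcast, mul_comm (n : ℤ) (m : ℤ),
        mul_dvd_mul_iff_left hmZ]
    set x : GL (Fin 2) F := Units.map (diagHom2 F) u with hx_def
    have hdetx : Matrix.GeneralLinearGroup.det x = u := by
      apply Units.ext
      rw [Matrix.GeneralLinearGroup.val_det_apply]
      show ((Units.map (diagHom2 F) u : GL (Fin 2) F) : Matrix (Fin 2) (Fin 2) F).det = (u : F)
      rw [Units.coe_map]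
      exact det_diagHom2 _
    have hun : u ^ n = 1 := by
      rw [← zpow_natCast u n, hu1]
    refine ⟨x, ?_, ?_, ?_⟩
    · rw [hx_def, ← map_pow, hun, map_one]
    · -- injective
      intro i j hij
      simp only at hij
      have h1 := (key2 _ _).mp hij
      rw [map_pow, map_pow, hdetx] at h1
      have hcomb : ((u ^ (i : ℕ))⁻¹ * u ^ (j : ℕ)) ^ m
          = u ^ ((((j : ℕ) : ℤ) - ((i : ℕ) : ℤ)) * m) := by
        rw [← zpow_natCast u (i : ℕ), ← zpow_natCast u (j : ℕ), ← zpow_neg, ← zpow_add,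
          ← zpow_natCast _ m, ← zpow_mul, neg_add_eq_sub]
      rw [hcomb, hu1] at h1
      have h2 : (n : ℤ) ∣ (((j : ℕ) : ℤ) - ((i : ℕ) : ℤ)) :=
        hco.dvd_of_dvd_mul_right h1
      have hi : (i : ℕ) < n := i.isLt
      have hj : (j : ℕ) < n := j.isLt
      have h4 : (((j : ℕ) : ℤ) - ((i : ℕ) : ℤ)) = 0 := by
        apply Int.eq_zero_of_abs_lt_dvd h2
        rw [abs_sub_lt_iff]
        constructor <;> [skip; skip] <;> omega
      apply Fin.ext
      omega
    · -- surjective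
      intro y
      obtain ⟨z, rfl⟩ := QuotientGroup.mk_surjective y
      obtain ⟨k, hk0⟩ := hg (Matrix.GeneralLinearGroup.det z)
      have hk : g ^ k = Matrix.GeneralLinearGroup.det z := hk0
      haveI : NeZero n := ⟨hn.ne'⟩
      have hcop : Nat.Coprime m n := Nat.coprime_comm.mp hgcd
      set w : (ZMod n)ˣ := ZMod.unitOfCoprime m hcop with hw_def
      set i0 : ZMod n := ((w⁻¹ : (ZMod n)ˣ) : ZMod n) * ((k : ℤ) : ZMod n) with hi0_def
      refine ⟨⟨i0.val, i0.val_lt⟩, ?_⟩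
      apply (key2 _ _).mpr
      rw [map_pow, hdetx, ← hk]
      have expand : ((u ^ i0.val)⁻¹ * g ^ k) ^ m
          = g ^ ((-(((m * i0.val : ℕ) : ℤ)) + k) * m) := by
        rw [hu_def, ← pow_mul, ← zpow_natCast g (m * i0.val), ← zpow_neg, ← zpow_add,
          ← zpow_natCast _ m, ← zpow_mul]
      rw [expand, glem, hcast]
      have : ((-(((m * i0.val : ℕ) : ℤ)) + k) * (m : ℤ))
          = (k - (m : ℤ) * i0.val) * m := by push_cast; ring
      rw [this, mul_dvd_mul_iff_right hmZ]
      rw [← ZMod.intCast_zmod_eq_zero_iff_dvd]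
      push_cast
      rw [ZMod.natCast_val, ZMod.cast_id]
      rw [hi0_def, show ((m : ℕ) : ZMod n) = (w : ZMod n) from (ZMod.coe_unitOfCoprime m hcop).symm,
        ← mul_assoc, Units.mul_inv, one_mul, sub_self]
  · -- exists x → gcd = 1
    rintro ⟨x, hxn, hinj, _⟩
    by_contra hgcd
    set d := Nat.gcd n m with hd
    have hdn : d ∣ n := Nat.gcd_dvd_left _ _
    have hdm : d ∣ m := Nat.gcd_dvd_right _ _
    have hd0 : 0 < d := Nat.gcd_pos_of_pos_left m hn
    have hd2 : 2 ≤ d := by omega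
    obtain ⟨n', hn'⟩ := hdn
    obtain ⟨s, hs⟩ := hdm
    have hn'0 : 0 < n' := Nat.pos_of_ne_zero fun h => by
      rw [h, Nat.mul_zero] at hn'; omega
    have hn'lt : n' < n := by
      nlinarith
    set u := Matrix.GeneralLinearGroup.det x with hu_def
    have hu : u ^ n = 1 := by rw [hu_def, ← map_pow, hxn, map_one]
    obtain ⟨k, hk0⟩ := hg u
    have hk : g ^ k = u := hk0
    have h1 : g ^ (k * n) = 1 := by rw [zpow_mul, zpow_natCast, hk, hu]
    have h2 := (glem _).mp h1
    rw [hcast] at h2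
    have h3 : (m : ℤ) ∣ k := by
      obtain ⟨t, ht⟩ := h2
      exact ⟨t, mul_right_cancel₀ hnZ (by rw [ht]; ring)⟩
    obtain ⟨t, ht⟩ := h3
    have heq : (fun i : Fin n => (QuotientGroup.mk (x ^ (i : ℕ)) : GL (Fin 2) F ⧸ Subgroup.comap
          (Matrix.GeneralLinearGroup.det : GL (Fin 2) F →* Fˣ)
          (powMonoidHom n : Fˣ →* Fˣ).range)) ⟨n', hn'lt⟩
        = (fun i : Fin n => (QuotientGroup.mk (x ^ (i : ℕ)) : GL (Fin 2) F ⧸ Subgroup.comap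
          (Matrix.GeneralLinearGroup.det : GL (Fin 2) F →* Fˣ)
          (powMonoidHom n : Fˣ →* Fˣ).range)) ⟨0, hn⟩ := by
      simp only
      apply (key2 _ _).mpr
      rw [pow_zero, map_one, mul_one, map_pow, ← hu_def, inv_pow, inv_eq_one, ← pow_mul]
      have hexp : u ^ (n' * m) = g ^ (k * ((n' * m : ℕ) : ℤ)) := by
        rw [← hk, ← zpow_natCast (g ^ k) (n' * m), ← zpow_mul]
      rw [hexp, glem, hcast]
      have hnn : (n : ℤ) = (d : ℤ) * n' := by exact_mod_cast hn'
      have hmm : (m : ℤ) = (d : ℤ) * s := by exact_mod_cast hs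
      refine ⟨t * s, ?_⟩
      rw [ht]
      push_cast
      rw [hnn, hmm]
      ring
    have := hinj heq
    rw [Fin.mk.injEq] at this
    omega
end

section
/- For all positive integers n and r with gcd(r, n) = 1, the set of prime numbers p satisfying both pʳ ≡ 1 (mod n) and gcd(n, (pʳ − 1)/n) = 1 is infinite. -/
private lemma pow_mod_sq (n r : ℕ) : (1 + n) ^ r ≡ 1 + r * n [MOD n ^ 2] := by
  induction r with
  | zero => simp [Nat.ModEq.refl]
  | succ r ih =>
    calc (1 + n) ^ (r + 1) = (1 + n) ^ r * (1 + n) := by ring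
    _ ≡ (1 + r * n) * (1 + n) [MOD n ^ 2] := ih.mul_right _
    _ = 1 + (r + 1) * n + r * n ^ 2 := by ring
    _ ≡ 1 + (r + 1) * n + 0 [MOD n ^ 2] := by
        exact Nat.ModEq.add_left _ (Nat.modEq_zero_iff_dvd.mpr ⟨r, by ring⟩)
    _ = 1 + (r + 1) * n := by ring

/-- For all positive integers `n` and `r` with `gcd (r, n) = 1`, there are infinitely many
primes `p` with `p ^ r ≡ 1 (mod n)` and `gcd (n, (p ^ r - 1) / n) = 1`. -/
theorem stmt_9 (n r : ℕ) (hn : 0 < n) (hr : 0 < r) (hgcd : Nat.gcd r n = 1) :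
    {p : ℕ | p.Prime ∧ p ^ r ≡ 1 [MOD n] ∧
      Nat.gcd n ((p ^ r - 1) / n) = 1}.Infinite := by
  haveI : NeZero (n ^ 2) := ⟨pow_ne_zero _ hn.ne'⟩
  have hcop : Nat.Coprime (1 + n) (n ^ 2) := by
    have h1 : Nat.Coprime (1 + n) n := by
      simpa [Nat.add_comm] using (Nat.coprime_succ_self n)
    exact h1.pow_right _
  have hu : IsUnit ((1 + n : ℕ) : ZMod (n ^ 2)) :=
    (ZMod.isUnit_iff_coprime _ _).mpr hcop
  have hinf := Nat.infinite_setOfPred_prime_and_eq_mod (q := n ^ 2) hu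
  refine hinf.mono ?_
  rintro p ⟨hp, hpmod⟩
  have hpe : p ≡ 1 + n [MOD n ^ 2] := (ZMod.natCast_eq_natCast_iff _ _ _).mp hpmod
  have hpow : p ^ r ≡ 1 + r * n [MOD n ^ 2] := (hpe.pow r).trans (pow_mod_sq n r)
  have h1le : 1 ≤ p ^ r := Nat.one_le_pow _ _ hp.pos
  -- p ^ r ≡ 1 [MOD n]
  have hmodn : p ^ r ≡ 1 [MOD n] := by
    have := hpow.of_dvd (by exact Dvd.intro n (by ring) : n ∣ n ^ 2)
    calc p ^ r ≡ 1 + r * n [MOD n] := this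
    _ ≡ 1 + 0 [MOD n] := Nat.ModEq.add_left _ (Nat.modEq_zero_iff_dvd.mpr ⟨r, by ring⟩)
    _ = 1 := by ring
  refine ⟨hp, hmodn, ?_⟩
  -- (p^r - 1) ≡ r * n [MOD n^2]
  have hx : p ^ r - 1 ≡ r * n [MOD n ^ 2] := by
    have h' : (p ^ r - 1) + 1 ≡ r * n + 1 [MOD n ^ 2] := by
      rw [Nat.sub_add_cancel h1le]
      simpa [Nat.add_comm] using hpow
    exact Nat.ModEq.add_right_cancel' 1 h'
  have key : (p ^ r - 1) / n % n = r % n := by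
    have h2 : n ^ 2 = n * n := sq n
    have e1 : (p ^ r - 1) / n % n = (p ^ r - 1) % (n * n) / n :=
      (Nat.mod_mul_right_div_self _ _ _).symm
    have e2 : r * n / n % n = r * n % (n * n) / n :=
      (Nat.mod_mul_right_div_self _ _ _).symm
    rw [e1, ← h2, hx, h2, ← e2, Nat.mul_div_cancel _ hn]
  have : Nat.gcd n ((p ^ r - 1) / n) = Nat.gcd n r := by
    rw [Nat.gcd_rec n ((p ^ r - 1) / n), key, ← Nat.gcd_rec]
  rw [this, Nat.gcd_comm]; exact hgcd
end

section
/- Let p ≥ 5 be a prime and let φ : ℤ/2ℤ → Aut(PSL₂(𝔽_p)) be any group homomorphism such that PGL₂(𝔽_p) is isomorphic to the semidirect product PSL₂(𝔽_p) ⋊_φ ℤ/2ℤ. Then the automorphism φ(1̄) of PSL₂(𝔽_p) (the image under φ of the nontrivial element of ℤ/2ℤ) is not an inner automorphism of PSL₂(𝔽_p); in particular φ is nontrivial, so the semidirect product is not a direct product. -/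
open Matrix

section auxGL
variable {R : Type*} [CommRing R]

lemma scalar_of_commutes' (M : Matrix (Fin 2) (Fin 2) R)
    (hE : M * !![1,1;0,1] = !![1,1;0,1] * M)
    (hF : M * !![1,0;1,1] = !![1,0;1,1] * M) : M = M 0 0 • 1 := by
  have e00 := congrFun (congrFun hE 0) 0
  have e01 := congrFun (congrFun hE 0) 1
  have f00 := congrFun (congrFun hF 0) 0
  simp [Matrix.mul_apply, Fin.sum_univ_two] at e00 e01 f00
  ext i j
  fin_cases i <;> fin_cases j <;> simp_all [Matrix.one_apply]

/-- The elementary unipotent matrix `!![1,1;0,1]` as a unit. -/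
def Eu' : GL (Fin 2) R :=
  ⟨!![1,1;0,1], !![1,-1;0,1], by norm_num [Matrix.mul_fin_two, Matrix.one_fin_two.symm],
    by norm_num [Matrix.mul_fin_two, Matrix.one_fin_two.symm]⟩

/-- The elementary unipotent matrix `!![1,0;1,1]` as a unit. -/
def Fu' : GL (Fin 2) R :=
  ⟨!![1,0;1,1], !![1,0;-1,1], by norm_num [Matrix.mul_fin_two, Matrix.one_fin_two.symm],
    by norm_num [Matrix.mul_fin_two, Matrix.one_fin_two.symm]⟩

lemma center_scalar' {z : GL (Fin 2) R} (hz : z ∈ Subgroup.center (GL (Fin 2) R)) :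
    (z : Matrix (Fin 2) (Fin 2) R) = (z : Matrix (Fin 2) (Fin 2) R) 0 0 • 1 := by
  have h := Subgroup.mem_center_iff.mp hz
  have hE' : (z : Matrix (Fin 2) (Fin 2) R) * !![1,1;0,1] = !![1,1;0,1] * (z : Matrix _ _ R) := by
    have := congrArg Units.val (h Eu')
    simpa [Eu', Units.val_mul] using this.symm
  have hF' : (z : Matrix (Fin 2) (Fin 2) R) * !![1,0;1,1] = !![1,0;1,1] * (z : Matrix _ _ R) := by
    have := congrArg Units.val (h Fu')
    simpa [Fu', Units.val_mul] using this.symm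
  exact scalar_of_commutes' _ hE' hF'

lemma scalar_mem_center' {A : GL (Fin 2) R} {a : R}
    (hA : (A : Matrix (Fin 2) (Fin 2) R) = a • 1) : A ∈ Subgroup.center (GL (Fin 2) R) := by
  refine Subgroup.mem_center_iff.mpr fun B => ?_
  ext
  simp [Units.val_mul, hA, Matrix.smul_mul, Matrix.mul_smul]

end auxGL

/-- `PGL₂(𝔽_p)` has trivial center for `p ≥ 5`. -/
lemma pgl_centerless {p : ℕ} [Fact p.Prime] (hp5 : 5 ≤ p)
    (x : GL (Fin 2) (ZMod p) ⧸ Subgroup.center (GL (Fin 2) (ZMod p)))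
    (hx : x ∈ Subgroup.center _) : x = 1 := by
  have h2 : (2 : ZMod p) ≠ 0 := by
    have h := ZMod.natCast_eq_zero_iff 2 p
    intro h0
    have hd : p ∣ 2 := h.mp (by exact_mod_cast h0)
    have := Nat.le_of_dvd (by norm_num) hd
    omega
  obtain ⟨A, rfl⟩ := QuotientGroup.mk_surjective x
  have key : ∀ X : GL (Fin 2) (ZMod p),
      Matrix.trace ((X⁻¹ : GL (Fin 2) (ZMod p)) : Matrix (Fin 2) (Fin 2) (ZMod p)) = 2 →
      A * X = X * A := by
    intro X htr
    have hq := Subgroup.mem_center_iff.mp hx (QuotientGroup.mk X)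
    rw [← QuotientGroup.mk_mul, ← QuotientGroup.mk_mul] at hq
    have hmem : (X * A)⁻¹ * (A * X) ∈ Subgroup.center (GL (Fin 2) (ZMod p)) :=
      QuotientGroup.eq.mp hq
    set z := (X * A)⁻¹ * (A * X) with hzdef
    have hzs := center_scalar' hmem
    set c := ((z : GL (Fin 2) (ZMod p)) : Matrix (Fin 2) (Fin 2) (ZMod p)) 0 0 with hc
    have h5 : A⁻¹ * X⁻¹ * A = z * X⁻¹ := by rw [hzdef]; group
    have h6 := congrArg Units.val h5
    simp only [Units.val_mul] at h6
    rw [hzs] at h6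
    have h7 : Matrix.trace (((A⁻¹ : GL (Fin 2) (ZMod p)) : Matrix (Fin 2) (Fin 2) (ZMod p)) *
        ((X⁻¹ : GL (Fin 2) (ZMod p)) : Matrix _ _ _) * ((A : GL (Fin 2) (ZMod p)) : Matrix _ _ _))
        = 2 := by
      rw [Matrix.trace_mul_comm]
      rw [← mul_assoc]
      have : ((A : GL (Fin 2) (ZMod p)) : Matrix (Fin 2) (Fin 2) (ZMod p)) *
          ((A⁻¹ : GL (Fin 2) (ZMod p)) : Matrix _ _ _) = 1 := by
        rw [← Units.val_mul, mul_inv_cancel, Units.val_one]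
      rw [this, one_mul, htr]
    rw [h6] at h7
    rw [Matrix.smul_mul, one_mul, Matrix.trace_smul, htr] at h7
    have hc1 : c = 1 := by
      have : c * 2 = 1 * 2 := by rw [one_mul]; simpa using h7
      exact mul_right_cancel₀ h2 this
    have hz1 : z = 1 := by
      ext
      rw [hzs, hc1, one_smul, Units.val_one]
    exact (inv_mul_eq_one.mp hz1).symm
  have hE := key Eu' (by simp [Eu', Units.inv_mk, Matrix.trace_fin_two]; norm_num)
  have hF := key Fu' (by simp [Fu', Units.inv_mk, Matrix.trace_fin_two]; norm_num)
  have hE' := congrArg Units.val hE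
  have hF' := congrArg Units.val hF
  simp only [Units.val_mul] at hE' hF'
  have hscal := scalar_of_commutes' ((A : GL (Fin 2) (ZMod p)) : Matrix (Fin 2) (Fin 2) (ZMod p))
    (by simpa [Eu'] using hE') (by simpa [Fu'] using hF')
  exact (QuotientGroup.eq_one_iff A).mpr (scalar_mem_center' hscal)

/-- If `φ(1̄)` is conjugation by `g`, then `(g⁻¹, 1̄)` is central in the semidirect product. -/
lemma sdp_central {N : Type*} [Group N] (φ : Multiplicative (ZMod 2) →* MulAut N)
    (g : N) (hg : φ (Multiplicative.ofAdd (1 : ZMod 2)) = MulAut.conj g) :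
    (⟨g⁻¹, Multiplicative.ofAdd (1 : ZMod 2)⟩ : N ⋊[φ] Multiplicative (ZMod 2)) ∈
      Subgroup.center (N ⋊[φ] Multiplicative (ZMod 2)) := by
  refine Subgroup.mem_center_iff.mpr fun y => ?_
  have hcases : ∀ a : ZMod 2, a = 0 ∨ a = 1 := by decide
  ext
  · show y.left * φ y.right g⁻¹ = g⁻¹ * φ (Multiplicative.ofAdd 1) y.left
    rcases hcases y.right.toAdd with h | h
    · have : y.right = 1 := by
        have : y.right = Multiplicative.ofAdd (0 : ZMod 2) := by rw [← h]; rfl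
        simpa using this
      rw [this, _root_.map_one, hg]
      simp [MulAut.conj_apply]
      group
    · have : y.right = Multiplicative.ofAdd (1 : ZMod 2) := by rw [← h]; rfl
      rw [this, hg]
      simp [MulAut.conj_apply]
      group
  · show y.right * Multiplicative.ofAdd 1 = Multiplicative.ofAdd 1 * y.right
    exact mul_comm _ _

/-- For a prime `p ≥ 5`, if `φ : ℤ/2ℤ → Aut(PSL₂(𝔽_p))` is any homomorphism such that
`PGL₂(𝔽_p) ≅ PSL₂(𝔽_p) ⋊_φ ℤ/2ℤ`, then the automorphism `φ(1̄)` of `PSL₂(𝔽_p)` is not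
inner; in particular `φ` is nontrivial. -/
theorem stmt_14 (p : ℕ) (hp : p.Prime) (hp5 : 5 ≤ p)
    (φ : Multiplicative (ZMod 2) →*
      MulAut (Matrix.SpecialLinearGroup (Fin 2) (ZMod p) ⧸
        Subgroup.center (Matrix.SpecialLinearGroup (Fin 2) (ZMod p))))
    (hφ : Nonempty ((GL (Fin 2) (ZMod p) ⧸ Subgroup.center (GL (Fin 2) (ZMod p))) ≃*
      ((Matrix.SpecialLinearGroup (Fin 2) (ZMod p) ⧸
          Subgroup.center (Matrix.SpecialLinearGroup (Fin 2) (ZMod p))) ⋊[φ]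
        Multiplicative (ZMod 2)))) :
    (¬ ∃ g : Matrix.SpecialLinearGroup (Fin 2) (ZMod p) ⧸
        Subgroup.center (Matrix.SpecialLinearGroup (Fin 2) (ZMod p)),
      φ (Multiplicative.ofAdd (1 : ZMod 2)) = MulAut.conj g) ∧
    φ ≠ 1 := by
  haveI : Fact p.Prime := ⟨hp⟩
  obtain ⟨e⟩ := hφ
  have main : ¬ ∃ g : Matrix.SpecialLinearGroup (Fin 2) (ZMod p) ⧸
      Subgroup.center (Matrix.SpecialLinearGroup (Fin 2) (ZMod p)),
      φ (Multiplicative.ofAdd (1 : ZMod 2)) = MulAut.conj g := by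
    rintro ⟨g, hg⟩
    set x : (Matrix.SpecialLinearGroup (Fin 2) (ZMod p) ⧸
        Subgroup.center (Matrix.SpecialLinearGroup (Fin 2) (ZMod p))) ⋊[φ]
        Multiplicative (ZMod 2) := ⟨g⁻¹, Multiplicative.ofAdd (1 : ZMod 2)⟩ with hxdef
    have hxc := sdp_central φ g hg
    -- pull back to PGL
    have hsc : e.symm x ∈ Subgroup.center
        (GL (Fin 2) (ZMod p) ⧸ Subgroup.center (GL (Fin 2) (ZMod p))) := by
      refine Subgroup.mem_center_iff.mpr fun h => ?_
      have h1 := Subgroup.mem_center_iff.mp hxc (e h)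
      have h2 := congrArg e.symm h1
      rw [_root_.map_mul, _root_.map_mul, MulEquiv.symm_apply_apply] at h2
      exact h2
    have hx1 : e.symm x = 1 := pgl_centerless hp5 _ hsc
    have : x = 1 := by
      have := congrArg e hx1
      simpa using this
    have hright := congrArg SemidirectProduct.right this
    simp only [hxdef, SemidirectProduct.one_right] at hright
    have h3 := congrArg Multiplicative.toAdd hright
    simp at h3
  refine ⟨main, fun h1 => main ⟨1, ?_⟩⟩
  rw [h1]
  simp
end
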